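/- With the Q-polynomial distance-regular graph setup and the split subspaces Ṽ^{μν}_{i,j}, for 0 ≤ i,j ≤ D one has: (i) dim Ṽ^{↓↓}_{i,j} = dim Ṽ^{↑↑}_{D−i,D−j}; (ii) dim Ṽ^{↓↑}_{i,j} = dim Ṽ^{↑↓}_{D−i,D−j}. -/

import Mathlib

noncomputable section

open Matrix Finset
open scoped ComplexInnerProductSpace

/-- A `Q`-polynomial distance-regular graph setup: a finite connected simple graph `G` on `X`
with diameter `D ≥ 3`, intersection numbers `p h i j`, primitive idempotents
`E 0, …, E D` of the Bose–Mesner algebra with (distinct, real) eigenvalues `θ 0, …, θ D`,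
and Krein parameters `q h i j` satisfying the `Q`-polynomial condition with respect to the
ordering `E 0, …, E D`. -/
structure QPolyDRG (X : Type*) [Fintype X] [DecidableEq X] where
  G : SimpleGraph X
  conn : G.Connected
  D : ℕ
  hD3 : 3 ≤ D
  dist_le : ∀ y z : X, G.dist y z ≤ D
  dist_eq : ∃ y z : X, G.dist y z = D
  p : ℕ → ℕ → ℕ → ℕ
  hp : ∀ h i j : ℕ, h ≤ D → i ≤ D → j ≤ D → ∀ y z : X, G.dist y z = h →
    Nat.card {w : X // G.dist y w = i ∧ G.dist w z = j} = p h i j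
  E : ℕ → Matrix X X ℂ
  θ : ℕ → ℝ
  q : ℕ → ℕ → ℕ → ℝ
  hE0 : E 0 = ((Fintype.card X : ℂ))⁻¹ • Matrix.of (fun _ _ => (1 : ℂ))
  hEsum : ∑ i ∈ Finset.range (D + 1), E i = 1
  hEmul : ∀ i ≤ D, ∀ j ≤ D, E i * E j = if i = j then E i else 0
  hEsym : ∀ i ≤ D, (E i)ᵀ = E i
  hEreal : ∀ i ≤ D, ∀ y z : X, ((E i) y z).im = 0
  hEinM : ∀ i ≤ D, E i ∈ Submodule.span ℂ
    {B : Matrix X X ℂ | ∃ k ≤ D, B = Matrix.of (fun y z => if G.dist y z = k then (1 : ℂ) else 0)}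
  hAE : ∀ i ≤ D,
    Matrix.of (fun y z => if G.dist y z = 1 then (1 : ℂ) else 0) * E i = (θ i : ℂ) • E i
  θ_inj : ∀ i ≤ D, ∀ j ≤ D, θ i = θ j → i = j
  hKrein : ∀ i ≤ D, ∀ j ≤ D, Matrix.hadamard (E i) (E j) =
    ((Fintype.card X : ℂ))⁻¹ • ∑ h ∈ Finset.range (D + 1), (q h i j : ℂ) • E h
  hq_zero : ∀ h ≤ D, ∀ i ≤ D, ∀ j ≤ D, (i + j < h ∨ h + j < i ∨ h + i < j) → q h i j = 0
  hq_ne : ∀ h ≤ D, ∀ i ≤ D, ∀ j ≤ D, (h = i + j ∨ i = h + j ∨ j = h + i) → q h i j ≠ 0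

namespace QPolyDRG

variable {X : Type*} [Fintype X] [DecidableEq X] (S : QPolyDRG X) (x : X)

/-- The `i`-th distance matrix `A_i`. -/
def Amat (i : ℕ) : Matrix X X ℂ :=
  Matrix.of (fun y z => if S.G.dist y z = i then (1 : ℂ) else 0)

/-- The adjacency matrix `A = A_1`. -/
def adj : Matrix X X ℂ := S.Amat 1

/-- The `i`-th dual idempotent `E*_i = E*_i(x)` with respect to the base vertex `x`. -/
def Estar (i : ℕ) : Matrix X X ℂ :=
  Matrix.diagonal (fun y => if S.G.dist x y = i then (1 : ℂ) else 0)

/-- The dual adjacency matrix `A* = A*(x)`, with `(A*)_{yy} = |X| (E_1)_{xy}`. -/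
def Astar : Matrix X X ℂ :=
  Matrix.diagonal (fun y => (Fintype.card X : ℂ) * S.E 1 x y)

/-- The subspace `E_i V` of the standard module, with the convention that it is `0`
for `i ∉ {0, …, D}`. -/
def EV (i : ℤ) : Submodule ℂ (EuclideanSpace ℂ X) :=
  if 0 ≤ i ∧ i ≤ S.D then LinearMap.range (Matrix.toEuclideanLin (S.E i.toNat)) else ⊥

/-- The `i`-th subconstituent `E*_i V` with respect to `x`, with the convention that it is `0`
for `i ∉ {0, …, D}`. -/
def EstarV (i : ℤ) : Submodule ℂ (EuclideanSpace ℂ X) :=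
  if 0 ≤ i ∧ i ≤ S.D then LinearMap.range (Matrix.toEuclideanLin (S.Estar x i.toNat)) else ⊥

/-- The subconstituent (Terwilliger) algebra `T = T(x)`, generated by `A` and `A*`. -/
def Talg : Subalgebra ℂ (Matrix X X ℂ) := Algebra.adjoin ℂ {S.adj, S.Astar x}

/-- A `T`-module: a subspace `W ⊆ V` with `B W ⊆ W` for all `B ∈ T`. -/
def IsTModule (W : Submodule ℂ (EuclideanSpace ℂ X)) : Prop :=
  ∀ B ∈ S.Talg x, ∀ w ∈ W, Matrix.toEuclideanLin B w ∈ W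

/-- An irreducible `T`-module. -/
def IsIrredTModule (W : Submodule ℂ (EuclideanSpace ℂ X)) : Prop :=
  S.IsTModule x W ∧ W ≠ ⊥ ∧ ∀ W' ≤ W, S.IsTModule x W' → W' = ⊥ ∨ W' = W

/-- The subspace `E_i W`, with the convention that it is `0` for `i ∉ {0, …, D}`. -/
def EW (W : Submodule ℂ (EuclideanSpace ℂ X)) (i : ℤ) : Submodule ℂ (EuclideanSpace ℂ X) :=
  if 0 ≤ i ∧ i ≤ S.D then Submodule.map (Matrix.toEuclideanLin (S.E i.toNat)) W else ⊥

/-- The subspace `E*_i W`, with the convention that it is `0` for `i ∉ {0, …, D}`. -/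
def EstarW (W : Submodule ℂ (EuclideanSpace ℂ X)) (i : ℤ) : Submodule ℂ (EuclideanSpace ℂ X) :=
  if 0 ≤ i ∧ i ≤ S.D then Submodule.map (Matrix.toEuclideanLin (S.Estar x i.toNat)) W else ⊥


/-- The endpoint `ρ = min { i : E*_i W ≠ 0 }` of a `T`-module `W`. -/
def endpt (W : Submodule ℂ (EuclideanSpace ℂ X)) : ℕ :=
  sInf {i : ℕ | i ≤ S.D ∧ S.EstarW x W i ≠ ⊥}

/-- The dual endpoint `τ = min { i : E_i W ≠ 0 }` of a `T`-module `W`. -/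
def dualEndpt (W : Submodule ℂ (EuclideanSpace ℂ X)) : ℕ :=
  sInf {i : ℕ | i ≤ S.D ∧ S.EW W i ≠ ⊥}

/-- The diameter `d = |{ i : E*_i W ≠ 0 }| - 1` of a `T`-module `W`. -/
def diam (W : Submodule ℂ (EuclideanSpace ℂ X)) : ℕ :=
  Set.ncard {i : ℕ | i ≤ S.D ∧ S.EstarW x W i ≠ ⊥} - 1

/-- The dual diameter `|{ i : E_i W ≠ 0 }| - 1` of a `T`-module `W`. -/
def dualDiam (W : Submodule ℂ (EuclideanSpace ℂ X)) : ℕ :=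
  Set.ncard {i : ℕ | i ≤ S.D ∧ S.EW W i ≠ ⊥} - 1

/-- The split subspace `W^{μν}_h` of an irreducible `T`-module `W` with endpoint `ρ`,
dual endpoint `τ` and diameter `d`.  Here `μ = false` stands for `↓` and `μ = true`
for `↑`, and similarly for `ν`; e.g.
`W^{↓↓}_h = (E*_ρ W + ⋯ + E*_{ρ+h} W) ∩ (E_τ W + ⋯ + E_{τ+d-h} W)`. -/
def Wsplit (W : Submodule ℂ (EuclideanSpace ℂ X)) (ρ τ d : ℕ) (μ ν : Bool) (h : ℕ) :
    Submodule ℂ (EuclideanSpace ℂ X) :=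
  (if μ then ⨆ k ∈ Finset.Icc (ρ + d - h) (ρ + d), S.EstarW x W k
    else ⨆ k ∈ Finset.Icc ρ (ρ + h), S.EstarW x W k) ⊓
  (if ν then ⨆ k ∈ Finset.Icc (τ + h) (τ + d), S.EW W k
    else ⨆ k ∈ Finset.Icc τ (τ + d - h), S.EW W k)

/-- The subspace `V^{μν}_{i,j}` (interpreted as `0` if `i = -1` or `j = -1`).
Here `μ = false` stands for `↓` and `μ = true` for `↑`, and similarly for `ν`; e.g.
`V^{↓↓}_{i,j} = (E*_0 V + ⋯ + E*_i V) ∩ (E_0 V + ⋯ + E_j V)` and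
`V^{↑↑}_{i,j} = (E*_D V + ⋯ + E*_{D-i} V) ∩ (E_D V + ⋯ + E_{D-j} V)`. -/
def Vsplit (μ ν : Bool) (i j : ℤ) : Submodule ℂ (EuclideanSpace ℂ X) :=
  if 0 ≤ i ∧ 0 ≤ j then
    (if μ then ⨆ k ∈ Finset.Icc (S.D - i.toNat) S.D, S.EstarV x k
      else ⨆ k ∈ Finset.range (i.toNat + 1), S.EstarV x k) ⊓
    (if ν then ⨆ k ∈ Finset.Icc (S.D - j.toNat) S.D, S.EV k
      else ⨆ k ∈ Finset.range (j.toNat + 1), S.EV k)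
  else ⊥

/-- The subspace `Ṽ^{μν}_{i,j}`: the orthogonal complement of
`V^{μν}_{i-1,j} + V^{μν}_{i,j-1}` in `V^{μν}_{i,j}` with respect to the standard
Hermitian form. -/
def tildeV (μ ν : Bool) (i j : ℕ) : Submodule ℂ (EuclideanSpace ℂ X) :=
  S.Vsplit x μ ν i j ⊓ (S.Vsplit x μ ν ((i : ℤ) - 1) j ⊔ S.Vsplit x μ ν i ((j : ℤ) - 1))ᗮ

end QPolyDRG

open Module

section Abstract
variable {V : Type*} [NormedAddCommGroup V] [InnerProductSpace ℂ V] [FiniteDimensional ℂ V]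

lemma aux_le_orth_symm {U W : Submodule ℂ V} (h : U ≤ Wᗮ) : W ≤ Uᗮ := by
  intro w hw
  rw [Submodule.mem_orthogonal]
  intro u hu
  have h2 := h hu w hw
  rwa [inner_eq_zero_symm] at h2

lemma aux_compl_eq {U W : Submodule ℂ V} (h1 : W ≤ Uᗮ) (h2 : U ⊔ W = ⊤) : Uᗮ = W := by
  refine (Submodule.eq_of_le_of_finrank_le h1 ?_).symm
  have h3 := Submodule.finrank_sup_add_finrank_inf_eq U W
  have h4 := Submodule.finrank_add_finrank_orthogonal (K := U)
  rw [h2, finrank_top] at h3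
  omega

lemma aux_rank_inf_orth {U W : Submodule ℂ V} (h : W ≤ U) :
    finrank ℂ ↥(U ⊓ Wᗮ) + finrank ℂ ↥W = finrank ℂ ↥U := by
  have h1 : W ⊔ Wᗮ ⊓ U = U := by
    rw [← sup_inf_assoc_of_le _ h, Submodule.sup_orthogonal_of_hasOrthogonalProjection, top_inf_eq]
  have h2 := Submodule.finrank_sup_add_finrank_inf_eq W (Wᗮ ⊓ U)
  have h3 : W ⊓ (Wᗮ ⊓ U) = ⊥ := by
    rw [eq_bot_iff, ← Submodule.inf_orthogonal_eq_bot W]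
    exact le_inf inf_le_left (inf_le_right.trans inf_le_left)
  rw [h1, h3, inf_comm Wᗮ U] at h2
  simp at h2
  omega

lemma aux_rank_tilde {A A' B B' : Submodule ℂ V} (hA : A ≤ A') (hB : B ≤ B') :
    finrank ℂ ↥((A' ⊓ B') ⊓ ((A ⊓ B') ⊔ (A' ⊓ B))ᗮ) + finrank ℂ ↥(A ⊓ B') + finrank ℂ ↥(A' ⊓ B)
      = finrank ℂ ↥(A' ⊓ B') + finrank ℂ ↥(A ⊓ B) := by
  have h1 : (A ⊓ B') ⊔ (A' ⊓ B) ≤ A' ⊓ B' :=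
    sup_le (inf_le_inf hA le_rfl) (inf_le_inf le_rfl hB)
  have h2 := aux_rank_inf_orth h1
  have h3 := Submodule.finrank_sup_add_finrank_inf_eq (A ⊓ B') (A' ⊓ B)
  have h4 : (A ⊓ B') ⊓ (A' ⊓ B) = A ⊓ B := by
    refine le_antisymm (le_inf (inf_le_left.trans inf_le_left) (inf_le_right.trans inf_le_right)) ?_
    exact le_inf (le_inf inf_le_left (inf_le_right.trans hB)) (le_inf (inf_le_left.trans hA) inf_le_right)
  rw [h4] at h3
  omega

lemma aux_rank_compl_inf (A B : Submodule ℂ V) :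
    finrank ℂ ↥(Aᗮ ⊓ Bᗮ) + finrank ℂ ↥A + finrank ℂ ↥B
      = finrank ℂ V + finrank ℂ ↥(A ⊓ B) := by
  rw [Submodule.inf_orthogonal]
  have h1 := Submodule.finrank_add_finrank_orthogonal (K := A ⊔ B)
  have h2 := Submodule.finrank_sup_add_finrank_inf_eq A B
  omega

end Abstract

section Ranges
variable {X : Type*} [Fintype X] [DecidableEq X]

lemma aux_toEuclideanLin_mul_apply (M N : Matrix X X ℂ) (v : EuclideanSpace ℂ X) :
    Matrix.toEuclideanLin (M * N) v = Matrix.toEuclideanLin M (Matrix.toEuclideanLin N v) := by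
  simp [Matrix.toEuclideanLin_apply, Matrix.mulVec_mulVec]

lemma aux_toEuclideanLin_one_apply (v : EuclideanSpace ℂ X) :
    Matrix.toEuclideanLin (1 : Matrix X X ℂ) v = v := by
  simp [Matrix.toEuclideanLin_apply]

lemma aux_range_orth {M N : Matrix X X ℂ} (hM : M.IsHermitian) (hMN : M * N = 0) :
    LinearMap.range (Matrix.toEuclideanLin N) ≤ (LinearMap.range (Matrix.toEuclideanLin M))ᗮ := by
  rintro _ ⟨u, rfl⟩
  rw [Submodule.mem_orthogonal]
  rintro _ ⟨t, rfl⟩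
  have hsym := Matrix.isHermitian_iff_isSymmetric.mp hM
  rw [hsym t, ← aux_toEuclideanLin_mul_apply, hMN]
  simp

lemma aux_ranges_partition (n : ℕ) (M : ℕ → Matrix X X ℂ)
    (hherm : ∀ k < n, (M k).IsHermitian)
    (hmul : ∀ k < n, ∀ l < n, k ≠ l → M k * M l = 0)
    (hsum : ∑ k ∈ Finset.range n, M k = 1)
    (s t : Finset ℕ) (hst : Disjoint s t) (hun : s ∪ t = Finset.range n) :
    (⨆ k ∈ s, LinearMap.range (Matrix.toEuclideanLin (M k)))ᗮ
      = ⨆ k ∈ t, LinearMap.range (Matrix.toEuclideanLin (M k)) := by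
  have hs : ∀ k ∈ s, k < n := fun k hk => by
    have : k ∈ s ∪ t := Finset.mem_union_left _ hk
    rw [hun] at this; exact Finset.mem_range.mp this
  have ht : ∀ k ∈ t, k < n := fun k hk => by
    have : k ∈ s ∪ t := Finset.mem_union_right _ hk
    rw [hun] at this; exact Finset.mem_range.mp this
  apply aux_compl_eq
  · refine iSup₂_le fun l hl => aux_le_orth_symm (iSup₂_le fun k hk => ?_)
    refine aux_range_orth (hherm l (ht l hl)) (hmul l (ht l hl) k (hs k hk) ?_)
    exact fun h => (Finset.disjoint_left.mp hst (h ▸ hk) hl)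
  · rw [eq_top_iff]
    intro v _
    have hv : v = ∑ k ∈ Finset.range n, Matrix.toEuclideanLin (M k) v := by
      have h1 : (∑ k ∈ Finset.range n, Matrix.toEuclideanLin (M k)) v
          = Matrix.toEuclideanLin (∑ k ∈ Finset.range n, M k) v := by
        rw [map_sum]
      rw [LinearMap.sum_apply] at h1
      rw [h1, hsum, aux_toEuclideanLin_one_apply]
    rw [hv]
    refine Submodule.sum_mem _ fun k hk => ?_
    rw [← hun] at hk
    rcases Finset.mem_union.mp hk with h | h
    · exact Submodule.mem_sup_left
        ((le_iSup₂ (f := fun k (_ : k ∈ s) => LinearMap.range (Matrix.toEuclideanLin (M k))) k h)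
          ⟨v, rfl⟩)
    · exact Submodule.mem_sup_right
        ((le_iSup₂ (f := fun k (_ : k ∈ t) => LinearMap.range (Matrix.toEuclideanLin (M k))) k h)
          ⟨v, rfl⟩)

end Ranges

section Concrete
variable {X : Type*} [Fintype X] [DecidableEq X] (S : QPolyDRG X) (x : X)

open QPolyDRG Module

lemma aux_Estar_herm (k : ℕ) : (S.Estar x k).IsHermitian := by
  unfold QPolyDRG.Estar
  rw [Matrix.isHermitian_diagonal_iff]
  intro y
  by_cases h : S.G.dist x y = k <;> simp [h, isSelfAdjoint_iff]

lemma aux_Estar_mul {k l : ℕ} (h : k ≠ l) : S.Estar x k * S.Estar x l = 0 := by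
  unfold QPolyDRG.Estar
  rw [Matrix.diagonal_mul_diagonal]
  ext y z
  rw [Matrix.diagonal_apply, Matrix.zero_apply]
  split_ifs with hyz h1 h2
  · exact absurd (h1.symm.trans h2) h
  all_goals simp

lemma aux_Estar_sum : ∑ k ∈ Finset.range (S.D + 1), S.Estar x k = 1 := by
  unfold QPolyDRG.Estar
  ext y z
  rw [Matrix.sum_apply]
  by_cases h : y = z
  · subst h
    simp only [Matrix.diagonal_apply_eq, Matrix.one_apply_eq]
    rw [Finset.sum_ite_eq]
    simp [Nat.lt_succ_iff, S.dist_le x y]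
  · simp [Matrix.diagonal_apply_ne _ h, Matrix.one_apply_ne h]

lemma aux_E_herm {k : ℕ} (hk : k ≤ S.D) : (S.E k).IsHermitian := by
  have h1 := S.hEsym k hk
  rw [Matrix.IsHermitian]
  ext y z
  rw [Matrix.conjTranspose_apply, show S.E k z y = (S.E k)ᵀ y z from rfl, h1]
  exact Complex.conj_eq_iff_im.mpr (S.hEreal k hk y z)

lemma aux_EstarV_eq {k : ℕ} (hk : k ≤ S.D) :
    S.EstarV x (k : ℤ) = LinearMap.range (Matrix.toEuclideanLin (S.Estar x k)) := by
  unfold QPolyDRG.EstarV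
  rw [if_pos ⟨Int.natCast_nonneg k, by exact_mod_cast hk⟩]
  simp

lemma aux_EV_eq {k : ℕ} (hk : k ≤ S.D) :
    S.EV (k : ℤ) = LinearMap.range (Matrix.toEuclideanLin (S.E k)) := by
  unfold QPolyDRG.EV
  rw [if_pos ⟨Int.natCast_nonneg k, by exact_mod_cast hk⟩]
  simp

/-- `A p = E*_0 V + ⋯ + E*_{p-1} V`. -/
def Asub (p : ℕ) : Submodule ℂ (EuclideanSpace ℂ X) :=
  ⨆ k ∈ Finset.range p, S.EstarV x (k : ℤ)

/-- `C p = E*_p V + ⋯ + E*_D V`. -/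
def Csub (p : ℕ) : Submodule ℂ (EuclideanSpace ℂ X) :=
  ⨆ k ∈ Finset.Icc p S.D, S.EstarV x (k : ℤ)

/-- `B p = E_0 V + ⋯ + E_{p-1} V`. -/
def Bsub (_x : X) (p : ℕ) : Submodule ℂ (EuclideanSpace ℂ X) :=
  ⨆ k ∈ Finset.range p, S.EV (k : ℤ)

/-- `D p = E_p V + ⋯ + E_D V`. -/
def Dsub (_x : X) (p : ℕ) : Submodule ℂ (EuclideanSpace ℂ X) :=
  ⨆ k ∈ Finset.Icc p S.D, S.EV (k : ℤ)

lemma Asub_zero : Asub S x 0 = ⊥ := by rw [Asub, Finset.range_zero]; simp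

lemma Bsub_zero : Bsub S x 0 = ⊥ := by rw [Bsub, Finset.range_zero]; simp

lemma Csub_top : Csub S x (S.D + 1) = ⊥ := by
  rw [Csub, Finset.Icc_eq_empty (by omega)]
  simp

lemma Dsub_top : Dsub S x (S.D + 1) = ⊥ := by
  rw [Dsub, Finset.Icc_eq_empty (by omega)]
  simp

lemma Asub_mono (p : ℕ) : Asub S x p ≤ Asub S x (p + 1) :=
  biSup_mono (fun k hk => Finset.range_subset_range.mpr (Nat.le_succ p) hk)

lemma Bsub_mono (p : ℕ) : Bsub S x p ≤ Bsub S x (p + 1) :=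
  biSup_mono (fun k hk => Finset.range_subset_range.mpr (Nat.le_succ p) hk)

lemma Csub_anti (p : ℕ) : Csub S x (p + 1) ≤ Csub S x p :=
  biSup_mono (fun k hk => Finset.Icc_subset_Icc_left (Nat.le_succ p) hk)

lemma Dsub_anti (p : ℕ) : Dsub S x (p + 1) ≤ Dsub S x p :=
  biSup_mono (fun k hk => Finset.Icc_subset_Icc_left (Nat.le_succ p) hk)

lemma Asub_orth {p : ℕ} (hp : p ≤ S.D + 1) : (Asub S x p)ᗮ = Csub S x p := by
  have h1 : Asub S x p = ⨆ k ∈ Finset.range p,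
      LinearMap.range (Matrix.toEuclideanLin (S.Estar x k)) :=
    iSup_congr fun k => iSup_congr fun hk =>
      aux_EstarV_eq S x (by have := Finset.mem_range.mp hk; omega)
  have h2 : Csub S x p = ⨆ k ∈ Finset.Icc p S.D,
      LinearMap.range (Matrix.toEuclideanLin (S.Estar x k)) :=
    iSup_congr fun k => iSup_congr fun hk =>
      aux_EstarV_eq S x (Finset.mem_Icc.mp hk).2
  rw [h1, h2]
  refine aux_ranges_partition (S.D + 1) (S.Estar x) (fun k _ => aux_Estar_herm S x k)
    (fun k _ l _ h => aux_Estar_mul S x h) (aux_Estar_sum S x) _ _ ?_ ?_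
  · rw [Finset.disjoint_left]
    intro k hk1 hk2
    have := Finset.mem_range.mp hk1
    have := (Finset.mem_Icc.mp hk2).1
    omega
  · ext k
    simp only [Finset.mem_union, Finset.mem_range, Finset.mem_Icc]
    omega

lemma Bsub_orth {p : ℕ} (hp : p ≤ S.D + 1) : (Bsub S x p)ᗮ = Dsub S x p := by
  have h1 : Bsub S x p = ⨆ k ∈ Finset.range p,
      LinearMap.range (Matrix.toEuclideanLin (S.E k)) :=
    iSup_congr fun k => iSup_congr fun hk =>
      aux_EV_eq S (by have := Finset.mem_range.mp hk; omega)
  have h2 : Dsub S x p = ⨆ k ∈ Finset.Icc p S.D,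
      LinearMap.range (Matrix.toEuclideanLin (S.E k)) :=
    iSup_congr fun k => iSup_congr fun hk =>
      aux_EV_eq S (Finset.mem_Icc.mp hk).2
  rw [h1, h2]
  refine aux_ranges_partition (S.D + 1) S.E (fun k hk => aux_E_herm S (by omega))
    (fun k hk l hl h => by
      have := S.hEmul k (by omega) l (by omega)
      rw [this, if_neg h])
    S.hEsum _ _ ?_ ?_
  · rw [Finset.disjoint_left]
    intro k hk1 hk2
    have := Finset.mem_range.mp hk1
    have := (Finset.mem_Icc.mp hk2).1
    omega
  · ext k
    simp only [Finset.mem_union, Finset.mem_range, Finset.mem_Icc]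
    omega

lemma Dsub_orth {p : ℕ} (hp : p ≤ S.D + 1) : (Dsub S x p)ᗮ = Bsub S x p := by
  rw [← Bsub_orth S x hp, Submodule.orthogonal_orthogonal]

end Concrete



section VsplitLemmas
variable {X : Type*} [Fintype X] [DecidableEq X] (S : QPolyDRG X) (x : X)

open QPolyDRG Module

lemma Vsplit_neg_left (μ ν : Bool) (q : ℤ) : S.Vsplit x μ ν (-1) q = ⊥ := by
  unfold QPolyDRG.Vsplit
  rw [if_neg (fun h => by omega)]

lemma Vsplit_neg_right (μ ν : Bool) (p : ℤ) : S.Vsplit x μ ν p (-1) = ⊥ := by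
  unfold QPolyDRG.Vsplit
  rw [if_neg (fun h => by omega)]

lemma Vff (p q : ℕ) : S.Vsplit x false false (p : ℤ) (q : ℤ)
    = Asub S x (p + 1) ⊓ Bsub S x (q + 1) := by
  unfold QPolyDRG.Vsplit
  rw [if_pos ⟨Int.natCast_nonneg p, Int.natCast_nonneg q⟩]
  simp only [Bool.false_eq_true, if_false, Int.toNat_natCast]
  rfl

lemma Vtt (p q : ℕ) : S.Vsplit x true true (p : ℤ) (q : ℤ)
    = Csub S x (S.D - p) ⊓ Dsub S x (S.D - q) := by
  unfold QPolyDRG.Vsplit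
  rw [if_pos ⟨Int.natCast_nonneg p, Int.natCast_nonneg q⟩]
  simp only [if_true, Int.toNat_natCast]
  rfl

lemma Vft (p q : ℕ) : S.Vsplit x false true (p : ℤ) (q : ℤ)
    = Asub S x (p + 1) ⊓ Dsub S x (S.D - q) := by
  unfold QPolyDRG.Vsplit
  rw [if_pos ⟨Int.natCast_nonneg p, Int.natCast_nonneg q⟩]
  simp only [Bool.false_eq_true, if_false, if_true, Int.toNat_natCast]
  rfl

lemma Vtf (p q : ℕ) : S.Vsplit x true false (p : ℤ) (q : ℤ)
    = Csub S x (S.D - p) ⊓ Bsub S x (q + 1) := by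
  unfold QPolyDRG.Vsplit
  rw [if_pos ⟨Int.natCast_nonneg p, Int.natCast_nonneg q⟩]
  simp only [Bool.false_eq_true, if_false, if_true, Int.toNat_natCast]
  rfl

lemma Vff_pred1 (p q : ℕ) : S.Vsplit x false false ((p : ℤ) - 1) (q : ℤ)
    = Asub S x p ⊓ Bsub S x (q + 1) := by
  cases p with
  | zero =>
    rw [show ((0 : ℕ) : ℤ) - 1 = -1 by norm_num, Vsplit_neg_left, Asub_zero, bot_inf_eq]
  | succ n =>
    rw [show ((n + 1 : ℕ) : ℤ) - 1 = (n : ℤ) by push_cast; ring, Vff]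

lemma Vff_pred2 (p q : ℕ) : S.Vsplit x false false (p : ℤ) ((q : ℤ) - 1)
    = Asub S x (p + 1) ⊓ Bsub S x q := by
  cases q with
  | zero =>
    rw [show ((0 : ℕ) : ℤ) - 1 = -1 by norm_num, Vsplit_neg_right, Bsub_zero, inf_bot_eq]
  | succ n =>
    rw [show ((n + 1 : ℕ) : ℤ) - 1 = (n : ℤ) by push_cast; ring, Vff]

lemma Vtt_pred1 {p : ℕ} (q : ℕ) (hp : p ≤ S.D) : S.Vsplit x true true ((p : ℤ) - 1) (q : ℤ)
    = Csub S x (S.D - p + 1) ⊓ Dsub S x (S.D - q) := by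
  cases p with
  | zero =>
    rw [show ((0 : ℕ) : ℤ) - 1 = -1 by norm_num, Vsplit_neg_left, Nat.sub_zero, Csub_top,
      bot_inf_eq]
  | succ n =>
    rw [show ((n + 1 : ℕ) : ℤ) - 1 = (n : ℤ) by push_cast; ring, Vtt,
      show S.D - n = S.D - (n + 1) + 1 by omega]

lemma Vtt_pred2 (p : ℕ) {q : ℕ} (hq : q ≤ S.D) : S.Vsplit x true true (p : ℤ) ((q : ℤ) - 1)
    = Csub S x (S.D - p) ⊓ Dsub S x (S.D - q + 1) := by
  cases q with
  | zero =>
    rw [show ((0 : ℕ) : ℤ) - 1 = -1 by norm_num, Vsplit_neg_right, Nat.sub_zero, Dsub_top,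
      inf_bot_eq]
  | succ n =>
    rw [show ((n + 1 : ℕ) : ℤ) - 1 = (n : ℤ) by push_cast; ring, Vtt,
      show S.D - n = S.D - (n + 1) + 1 by omega]

lemma Vft_pred1 (p q : ℕ) : S.Vsplit x false true ((p : ℤ) - 1) (q : ℤ)
    = Asub S x p ⊓ Dsub S x (S.D - q) := by
  cases p with
  | zero =>
    rw [show ((0 : ℕ) : ℤ) - 1 = -1 by norm_num, Vsplit_neg_left, Asub_zero, bot_inf_eq]
  | succ n =>
    rw [show ((n + 1 : ℕ) : ℤ) - 1 = (n : ℤ) by push_cast; ring, Vft]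

lemma Vft_pred2 (p : ℕ) {q : ℕ} (hq : q ≤ S.D) : S.Vsplit x false true (p : ℤ) ((q : ℤ) - 1)
    = Asub S x (p + 1) ⊓ Dsub S x (S.D - q + 1) := by
  cases q with
  | zero =>
    rw [show ((0 : ℕ) : ℤ) - 1 = -1 by norm_num, Vsplit_neg_right, Nat.sub_zero, Dsub_top,
      inf_bot_eq]
  | succ n =>
    rw [show ((n + 1 : ℕ) : ℤ) - 1 = (n : ℤ) by push_cast; ring, Vft,
      show S.D - n = S.D - (n + 1) + 1 by omega]

lemma Vtf_pred1 {p : ℕ} (q : ℕ) (hp : p ≤ S.D) : S.Vsplit x true false ((p : ℤ) - 1) (q : ℤ)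
    = Csub S x (S.D - p + 1) ⊓ Bsub S x (q + 1) := by
  cases p with
  | zero =>
    rw [show ((0 : ℕ) : ℤ) - 1 = -1 by norm_num, Vsplit_neg_left, Nat.sub_zero, Csub_top,
      bot_inf_eq]
  | succ n =>
    rw [show ((n + 1 : ℕ) : ℤ) - 1 = (n : ℤ) by push_cast; ring, Vtf,
      show S.D - n = S.D - (n + 1) + 1 by omega]

lemma Vtf_pred2 (p q : ℕ) : S.Vsplit x true false (p : ℤ) ((q : ℤ) - 1)
    = Csub S x (S.D - p) ⊓ Bsub S x q := by
  cases q with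
  | zero =>
    rw [show ((0 : ℕ) : ℤ) - 1 = -1 by norm_num, Vsplit_neg_right, Bsub_zero, inf_bot_eq]
  | succ n =>
    rw [show ((n + 1 : ℕ) : ℤ) - 1 = (n : ℤ) by push_cast; ring, Vtf]

end VsplitLemmas

open QPolyDRG in
/-- `dim Ṽ^{↓↓}_{i,j} = dim Ṽ^{↑↑}_{D-i,D-j}` and `dim Ṽ^{↓↑}_{i,j} = dim Ṽ^{↑↓}_{D-i,D-j}`. -/
theorem drg_tildeV_dim {X : Type*} [Fintype X] [DecidableEq X] (S : QPolyDRG X) (x : X) :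
    ∀ i : ℕ, i ≤ S.D → ∀ j : ℕ, j ≤ S.D →
      Module.finrank ℂ (S.tildeV x false false i j) =
        Module.finrank ℂ (S.tildeV x true true (S.D - i) (S.D - j)) ∧
      Module.finrank ℂ (S.tildeV x false true i j) =
        Module.finrank ℂ (S.tildeV x true false (S.D - i) (S.D - j)) := by
  intro i hi j hj
  have e1 : S.D - (S.D - i) = i := Nat.sub_sub_self hi
  have e2 : S.D - (S.D - j) = j := Nat.sub_sub_self hj
  have eff : S.tildeV x false false i j
      = (Asub S x (i + 1) ⊓ Bsub S x (j + 1))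
        ⊓ ((Asub S x i ⊓ Bsub S x (j + 1)) ⊔ (Asub S x (i + 1) ⊓ Bsub S x j))ᗮ := by
    unfold QPolyDRG.tildeV
    rw [Vff, Vff_pred1, Vff_pred2]
  have ett : S.tildeV x true true (S.D - i) (S.D - j)
      = (Csub S x i ⊓ Dsub S x j)
        ⊓ ((Csub S x (i + 1) ⊓ Dsub S x j) ⊔ (Csub S x i ⊓ Dsub S x (j + 1)))ᗮ := by
    unfold QPolyDRG.tildeV
    rw [Vtt, Vtt_pred1 S x _ (Nat.sub_le _ _), Vtt_pred2 S x _ (Nat.sub_le _ _), e1, e2]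
  have eft : S.tildeV x false true i j
      = (Asub S x (i + 1) ⊓ Dsub S x (S.D - j))
        ⊓ ((Asub S x i ⊓ Dsub S x (S.D - j)) ⊔ (Asub S x (i + 1) ⊓ Dsub S x (S.D - j + 1)))ᗮ := by
    unfold QPolyDRG.tildeV
    rw [Vft, Vft_pred1, Vft_pred2 S x _ hj]
  have etf : S.tildeV x true false (S.D - i) (S.D - j)
      = (Csub S x i ⊓ Bsub S x (S.D - j + 1))
        ⊓ ((Csub S x (i + 1) ⊓ Bsub S x (S.D - j + 1)) ⊔ (Csub S x i ⊓ Bsub S x (S.D - j)))ᗮ := by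
    unfold QPolyDRG.tildeV
    rw [Vtf, Vtf_pred1 S x _ (Nat.sub_le _ _), Vtf_pred2, e1]
  have t1 := aux_rank_tilde (Asub_mono S x i) (Bsub_mono S x j)
  have t2 := aux_rank_tilde (Csub_anti S x i) (Dsub_anti S x j)
  have t3 := aux_rank_tilde (Asub_mono S x i) (Dsub_anti S x (S.D - j))
  have t4 := aux_rank_tilde (Csub_anti S x i) (Bsub_mono S x (S.D - j))
  have c1 := aux_rank_compl_inf (Asub S x i) (Bsub S x j)
  rw [Asub_orth S x (by omega), Bsub_orth S x (by omega)] at c1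
  have c2 := aux_rank_compl_inf (Asub S x (i + 1)) (Bsub S x j)
  rw [Asub_orth S x (by omega), Bsub_orth S x (by omega)] at c2
  have c3 := aux_rank_compl_inf (Asub S x i) (Bsub S x (j + 1))
  rw [Asub_orth S x (by omega), Bsub_orth S x (by omega)] at c3
  have c4 := aux_rank_compl_inf (Asub S x (i + 1)) (Bsub S x (j + 1))
  rw [Asub_orth S x (by omega), Bsub_orth S x (by omega)] at c4
  have d1 := aux_rank_compl_inf (Asub S x i) (Dsub S x (S.D - j))
  rw [Asub_orth S x (by omega), Dsub_orth S x (by omega)] at d1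
  have d2 := aux_rank_compl_inf (Asub S x (i + 1)) (Dsub S x (S.D - j))
  rw [Asub_orth S x (by omega), Dsub_orth S x (by omega)] at d2
  have d3 := aux_rank_compl_inf (Asub S x i) (Dsub S x (S.D - j + 1))
  rw [Asub_orth S x (by omega), Dsub_orth S x (by omega)] at d3
  have d4 := aux_rank_compl_inf (Asub S x (i + 1)) (Dsub S x (S.D - j + 1))
  rw [Asub_orth S x (by omega), Dsub_orth S x (by omega)] at d4
  constructor
  · rw [eff, ett]
    omega
  · rw [eft, etf]
    omega


end
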